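/- Let K ≥ 1, let w_1 ≤ w_2 ≤ … ≤ w_K be positive real numbers, let γ ∈ (0,1], let M ≥ 1 be an integer, and let l_1 ≥ l_2 ≥ … ≥ l_K ≥ 0 be real numbers. Then Σ_{k=1}^{K} (w_k^{γ^M} / Σ_{j=1}^{K} w_j^{γ^M}) · l_k ≥ Σ_{k=1}^{K} (w_k^{γ} / Σ_{j=1}^{K} w_j^{γ}) · l_k. -/

import Mathlib

lemma chebyshev_aux (S : Finset ℕ) (a b l : ℕ → ℝ)
    (h : ∀ i ∈ S, ∀ j ∈ S, 0 ≤ (l i - l j) * (a i * b j - a j * b i)) :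
    (∑ i ∈ S, l i * b i) * (∑ i ∈ S, a i) ≤ (∑ i ∈ S, l i * a i) * (∑ i ∈ S, b i) := by
  have key : 0 ≤ ∑ i ∈ S, ∑ j ∈ S, (l i - l j) * (a i * b j - a j * b i) :=
    Finset.sum_nonneg fun i hi => Finset.sum_nonneg fun j hj => h i hi j hj
  have e1 : ∀ i j : ℕ, (l i - l j) * (a i * b j - a j * b i)
      = (l i * a i * b j - l i * b i * a j) + (l j * a j * b i - l j * b j * a i) := by
    intros; ring
  have swap : ∑ i ∈ S, ∑ j ∈ S, (l j * a j * b i - l j * b j * a i)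
      = ∑ i ∈ S, ∑ j ∈ S, (l i * a i * b j - l i * b i * a j) := Finset.sum_comm
  have expand : ∑ i ∈ S, ∑ j ∈ S, (l i - l j) * (a i * b j - a j * b i)
      = 2 * ((∑ i ∈ S, l i * a i) * (∑ i ∈ S, b i)
            - (∑ i ∈ S, l i * b i) * (∑ i ∈ S, a i)) := by
    simp_rw [e1, Finset.sum_add_distrib]
    rw [swap]
    simp_rw [Finset.sum_sub_distrib, ← Finset.mul_sum]
    rw [← Finset.sum_mul, ← Finset.sum_mul]
    ring
  linarith [expand ▸ key]

lemma rpow_cross {x y α β : ℝ} (hx : 0 < x) (hxy : x ≤ y) (hα : 0 < α) (hαβ : α ≤ β) :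
    y ^ α * x ^ β ≤ x ^ α * y ^ β := by
  have hy : 0 < y := lt_of_lt_of_le hx hxy
  have h1 : x ^ β = x ^ α * x ^ (β - α) := by
    rw [← Real.rpow_add hx]; ring_nf
  have h2 : y ^ β = y ^ α * y ^ (β - α) := by
    rw [← Real.rpow_add hy]; ring_nf
  rw [h1, h2]
  have h3 : x ^ (β - α) ≤ y ^ (β - α) :=
    Real.rpow_le_rpow (le_of_lt hx) hxy (by linarith)
  have p1 : 0 < x ^ α := Real.rpow_pos_of_pos hx α
  have p2 : 0 < y ^ α := Real.rpow_pos_of_pos hy α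
  nlinarith [mul_le_mul_of_nonneg_left h3 (mul_pos p1 p2).le]

/-- For positive ascending weights `w 1 ≤ … ≤ w K`, `γ ∈ (0,1]`, an integer
`M ≥ 1` and nonincreasing nonnegative losses `l 1 ≥ … ≥ l K ≥ 0`, the flatter
distribution obtained with exponent `γ^M` assigns at least as large an expected loss as
the one with exponent `γ`. -/
theorem flatter_distribution_larger_expected_loss
    (K : ℕ) (hK : 1 ≤ K) (w : ℕ → ℝ)
    (hw_pos : ∀ i ∈ Finset.Icc 1 K, 0 < w i)
    (hw_mono : ∀ i ∈ Finset.Icc 1 K, ∀ j ∈ Finset.Icc 1 K, i ≤ j → w i ≤ w j)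
    (γ : ℝ) (hγ : γ ∈ Set.Ioc (0 : ℝ) 1) (M : ℕ) (hM : 1 ≤ M)
    (l : ℕ → ℝ)
    (hl_nonneg : ∀ i ∈ Finset.Icc 1 K, 0 ≤ l i)
    (hl_anti : ∀ i ∈ Finset.Icc 1 K, ∀ j ∈ Finset.Icc 1 K, i ≤ j → l j ≤ l i) :
    ∑ k ∈ Finset.Icc 1 K,
        (w k ^ (γ ^ M) / ∑ j ∈ Finset.Icc 1 K, w j ^ (γ ^ M)) * l k ≥
      ∑ k ∈ Finset.Icc 1 K,
        (w k ^ γ / ∑ j ∈ Finset.Icc 1 K, w j ^ γ) * l k := by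
  obtain ⟨hγ0, hγ1⟩ := hγ
  set S := Finset.Icc 1 K with hS
  have hne : S.Nonempty := ⟨1, by simp [hS, hK]⟩
  set α := γ ^ M with hα
  have hα0 : 0 < α := pow_pos hγ0 M
  have hαγ : α ≤ γ := by
    calc α ≤ γ ^ 1 := pow_le_pow_of_le_one hγ0.le hγ1 hM
    _ = γ := pow_one γ
  have hA : 0 < ∑ j ∈ S, w j ^ α :=
    Finset.sum_pos (fun j hj => Real.rpow_pos_of_pos (hw_pos j hj) α) hne
  have hB : 0 < ∑ j ∈ S, w j ^ γ :=
    Finset.sum_pos (fun j hj => Real.rpow_pos_of_pos (hw_pos j hj) γ) hne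
  have main : (∑ i ∈ S, l i * w i ^ γ) * (∑ i ∈ S, w i ^ α)
      ≤ (∑ i ∈ S, l i * w i ^ α) * (∑ i ∈ S, w i ^ γ) := by
    apply chebyshev_aux
    intro i hi j hj
    rcases le_total i j with hij | hij
    · have hl : 0 ≤ l i - l j := by linarith [hl_anti i hi j hj hij]
      have hw : 0 ≤ w i ^ α * w j ^ γ - w j ^ α * w i ^ γ := by
        linarith [rpow_cross (hw_pos i hi) (hw_mono i hi j hj hij) hα0 hαγ]
      exact mul_nonneg hl hw
    · have hl : l i - l j ≤ 0 := by linarith [hl_anti j hj i hi hij]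
      have hw : w i ^ α * w j ^ γ - w j ^ α * w i ^ γ ≤ 0 := by
        linarith [rpow_cross (hw_pos j hj) (hw_mono j hj i hi hij) hα0 hαγ]
      nlinarith [mul_nonneg (neg_nonneg.2 hl) (neg_nonneg.2 hw)]
  have lhs_eq : ∑ k ∈ S, (w k ^ α / ∑ j ∈ S, w j ^ α) * l k
      = (∑ k ∈ S, l k * w k ^ α) / (∑ j ∈ S, w j ^ α) := by
    rw [Finset.sum_div]
    exact Finset.sum_congr rfl fun k _ => by ring
  have rhs_eq : ∑ k ∈ S, (w k ^ γ / ∑ j ∈ S, w j ^ γ) * l k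
      = (∑ k ∈ S, l k * w k ^ γ) / (∑ j ∈ S, w j ^ γ) := by
    rw [Finset.sum_div]
    exact Finset.sum_congr rfl fun k _ => by ring
  rw [ge_iff_le, rhs_eq, lhs_eq, div_le_div_iff₀ hB hA]
  exact main
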